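/- Let α be strictly increasing with α_n > 1 and α_n → ∞. The following assertions are equivalent: (a) 0 ∉ σ(C; Λ₀(α)), i.e. the Cesàro operator C is bijective on Λ₀(α) with continuous inverse; (b) for each k ≥ 1 there exists l > k such that sup_{n≥1} ( log n − (1/k − 1/l)·α_n ) < ∞; (c) lim_{n→∞} (log n)/α_n = 0. -/

import Mathlib

open Filter Finset Topology

noncomputable section

/-- The weight `w_k(n) = e^{-alpha_n / k}`.  Indices are shifted by one: the natural
numbers `k n : Nat` represent the indices `k+1` and `n+1` (both running from `1`). -/
def wt (a : ℕ → ℝ) (k n : ℕ) : ℝ := Real.exp (-(a n) / ((k : ℝ) + 1))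

/-- Membership in the power series space of finite type `Λ₀(α)`:
`x ∈ Λ₀(α)` iff `w_k(n)|x_n| → 0` for every `k ≥ 1`. -/
def memLambda (a : ℕ → ℝ) (x : ℕ → ℂ) : Prop :=
  ∀ k : ℕ, Tendsto (fun n => wt a k n * ‖x n‖) atTop (𝓝 0)

/-- The norm `p_k(x) = sup_n w_k(n)|x_n|` generating the Fréchet topology of `Λ₀(α)`. -/
def pk (a : ℕ → ℝ) (k : ℕ) (x : ℕ → ℂ) : ℝ := ⨆ n : ℕ, wt a k n * ‖x n‖

/-- The discrete Cesàro operator `(C x)_n = (x_1 + ⋯ + x_n)/n` (0-indexed). -/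
def cesaro (x : ℕ → ℂ) : ℕ → ℂ := fun n => (∑ i ∈ Finset.range (n + 1), x i) / ((n : ℂ) + 1)

/-- `lam` belongs to the resolvent set of the Cesàro operator on `Λ₀(α)`:
`lam • I - C` has a linear inverse `T` on `Λ₀(α)` which is continuous for the
Fréchet topology generated by the norms `p_k`. -/
def InResolvent (a : ℕ → ℝ) (lam : ℂ) : Prop :=
  ∃ T : (ℕ → ℂ) → (ℕ → ℂ),
    (∀ x, memLambda a x → memLambda a (T x)) ∧
    (∀ x y, memLambda a x → memLambda a y → T (x + y) = T x + T y) ∧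
    (∀ (c : ℂ) (x), memLambda a x → T (c • x) = c • T x) ∧
    (∀ k : ℕ, ∃ l : ℕ, ∃ M : ℝ, 0 < M ∧ ∀ x, memLambda a x → pk a k (T x) ≤ M * pk a l x) ∧
    (∀ x, memLambda a x → T (lam • x - cesaro x) = x) ∧
    (∀ x, memLambda a x → lam • T x - cesaro (T x) = x)

namespace Stmt6Aux

lemma wt_pos (a : ℕ → ℝ) (k n : ℕ) : 0 < wt a k n := Real.exp_pos _

lemma wt_mono {a : ℕ → ℝ} (h1 : ∀ n, 1 < a n) {k l : ℕ} (hkl : k ≤ l) (n : ℕ) :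
    wt a k n ≤ wt a l n := by
  have ha : (0:ℝ) ≤ a n := le_of_lt (lt_trans one_pos (h1 n))
  apply Real.exp_le_exp.2
  rw [neg_div, neg_div, neg_le_neg_iff]
  gcongr

lemma wt_anti {a : ℕ → ℝ} (hmono : Monotone a) (k : ℕ) {m n : ℕ} (h : m ≤ n) :
    wt a k n ≤ wt a k m := by
  apply Real.exp_le_exp.2
  have : a m ≤ a n := hmono h
  have hk : (0:ℝ) < (k:ℝ) + 1 := by positivity
  rw [neg_div, neg_div, neg_le_neg_iff]
  gcongr

def Tinv (y : ℕ → ℂ) : ℕ → ℂ := fun n => (n : ℂ) * y (n - 1) - ((n : ℂ) + 1) * y n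

lemma key_id (x : ℕ → ℂ) (n : ℕ) :
    ((n:ℂ)+1) * cesaro x n - (n:ℂ) * cesaro x (n-1) = x n := by
  cases n with
  | zero => simp [cesaro]
  | succ m =>
    have h1 : ((m:ℂ)+1) ≠ 0 := Nat.cast_add_one_ne_zero m
    have h2 : ((m:ℂ)+1+1) ≠ 0 := by
      have := Nat.cast_add_one_ne_zero (R := ℂ) (m+1)
      push_cast at this; exact this
    simp only [cesaro, Nat.add_sub_cancel]
    rw [Finset.sum_range_succ]
    push_cast
    field_simp
    ring

lemma cesaro_Tinv (y : ℕ → ℂ) (n : ℕ) : cesaro (Tinv y) n = - y n := by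
  have hs : ∑ i ∈ Finset.range (n+1), Tinv y i = -(((n:ℂ)+1) * y n) := by
    calc ∑ i ∈ Finset.range (n+1), Tinv y i
        = ∑ i ∈ Finset.range (n+1),
            ((fun i : ℕ => (i:ℂ) * y (i-1)) i - (fun i : ℕ => (i:ℂ) * y (i-1)) (i+1)) := by
          apply Finset.sum_congr rfl
          intro i _
          simp only [Tinv, Nat.add_sub_cancel]
          push_cast
          ring
      _ = (fun i : ℕ => (i:ℂ) * y (i-1)) 0 - (fun i : ℕ => (i:ℂ) * y (i-1)) (n+1) :=
          Finset.sum_range_sub' _ _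
      _ = -(((n:ℂ)+1) * y n) := by
          simp only [Nat.add_sub_cancel, Nat.cast_zero, zero_mul]
          push_cast
          ring
  have hne : ((n:ℂ)+1) ≠ 0 := Nat.cast_add_one_ne_zero n
  unfold cesaro
  rw [hs, neg_div, mul_comm, mul_div_assoc, div_self hne, mul_one]

lemma exp_bound {a : ℕ → ℝ} {k l : ℕ} {M : ℝ}
    (h : ∀ n : ℕ, Real.log ((n:ℝ)+1) - (1/((k:ℝ)+1) - 1/((l:ℝ)+1)) * a n ≤ M) (n : ℕ) :
    ((n:ℝ)+1) * wt a k n ≤ Real.exp M * wt a l n := by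
  have h0 : (0:ℝ) < (n:ℝ)+1 := by positivity
  have e1 : ((n:ℝ)+1) * wt a k n = Real.exp (Real.log ((n:ℝ)+1) + (-(a n)/((k:ℝ)+1))) := by
    rw [Real.exp_add, Real.exp_log h0]; rfl
  have e2 : Real.exp M * wt a l n = Real.exp (M + (-(a n)/((l:ℝ)+1))) := by
    rw [Real.exp_add]; rfl
  rw [e1, e2]
  apply Real.exp_le_exp.2
  have hr : (1/((k:ℝ)+1) - 1/((l:ℝ)+1)) * a n = (-(a n)/((l:ℝ)+1)) - (-(a n)/((k:ℝ)+1)) := by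
    ring
  linarith [h n, hr]

lemma abs_natCast_add_one (n : ℕ) : ‖(n:ℂ)+1‖ = (n:ℝ)+1 := by
  have := Complex.norm_natCast (n+1)
  push_cast at this
  exact this

lemma Tinv_term_bound {a : ℕ → ℝ} (hmono : StrictMono a) {k l : ℕ} {M : ℝ}
    (key : ∀ n : ℕ, ((n:ℝ)+1) * wt a k n ≤ Real.exp M * wt a l n) (y : ℕ → ℂ) (n : ℕ) :
    wt a k n * ‖Tinv y n‖ ≤
      Real.exp M * (wt a l (n-1) * ‖y (n-1)‖)
        + Real.exp M * (wt a l n * ‖y n‖) := by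
  have habs : ‖Tinv y n‖ ≤
      (n:ℝ) * ‖y (n-1)‖ + ((n:ℝ)+1) * ‖y n‖ := by
    unfold Tinv
    calc ‖(n:ℂ) * y (n-1) - ((n:ℂ)+1) * y n‖
        ≤ ‖(n:ℂ) * y (n-1)‖ + ‖((n:ℂ)+1) * y n‖ := by
          rw [sub_eq_add_neg]
          refine (norm_add_le _ _).trans (le_of_eq ?_)
          rw [norm_neg]
      _ = (n:ℝ) * ‖y (n-1)‖ + ((n:ℝ)+1) * ‖y n‖ := by
          rw [norm_mul, norm_mul, Complex.norm_natCast, abs_natCast_add_one]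
  have hwn : wt a l n ≤ wt a l (n-1) := wt_anti hmono.monotone l (Nat.sub_le n 1)
  have c1 : (0:ℝ) ≤ ‖y (n-1)‖ := norm_nonneg _
  have c2 : (0:ℝ) ≤ ‖y n‖ := norm_nonneg _
  have he : (0:ℝ) ≤ Real.exp M := (Real.exp_pos M).le
  calc wt a k n * ‖Tinv y n‖
      ≤ wt a k n * ((n:ℝ) * ‖y (n-1)‖ + ((n:ℝ)+1) * ‖y n‖) :=
        mul_le_mul_of_nonneg_left habs (wt_pos a k n).le
    _ = ((n:ℝ) * wt a k n) * ‖y (n-1)‖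
        + (((n:ℝ)+1) * wt a k n) * ‖y n‖ := by ring
    _ ≤ (((n:ℝ)+1) * wt a k n) * ‖y (n-1)‖
        + (((n:ℝ)+1) * wt a k n) * ‖y n‖ := by
        have h' : (n:ℝ) * wt a k n ≤ ((n:ℝ)+1) * wt a k n := by
          nlinarith [(wt_pos a k n).le]
        exact add_le_add (mul_le_mul_of_nonneg_right h' c1) le_rfl
    _ ≤ (Real.exp M * wt a l n) * ‖y (n-1)‖
        + (Real.exp M * wt a l n) * ‖y n‖ :=
        add_le_add (mul_le_mul_of_nonneg_right (key n) c1)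
          (mul_le_mul_of_nonneg_right (key n) c2)
    _ ≤ Real.exp M * (wt a l (n-1) * ‖y (n-1)‖)
        + Real.exp M * (wt a l n * ‖y n‖) := by
        rw [mul_assoc, mul_assoc]
        gcongr

def delta (N : ℕ) : ℕ → ℂ := fun m => if m = N then 1 else 0

lemma memLambda_delta (a : ℕ → ℝ) (N : ℕ) : memLambda a (delta N) := by
  intro k
  apply Tendsto.congr' _ (tendsto_const_nhds (x := (0:ℝ)))
  filter_upwards [eventually_gt_atTop N] with n hn
  have : n ≠ N := by omega
  simp [delta, this]

end Stmt6Aux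

/-- the following are equivalent: (a) `0 ∉ σ(C; Λ₀(α))`, i.e. `C` has a
continuous linear inverse on `Λ₀(α)`; (b) for each `k` there is `l > k` with
`sup_n (log n - (1/k - 1/l) α_n) < ∞`; (c) `(log n)/α_n → 0`. -/
theorem stmt6 (a : ℕ → ℝ) (hmono : StrictMono a) (h1 : ∀ n, 1 < a n)
    (htop : Tendsto a atTop atTop) :
    [ InResolvent a 0,
      ∀ k : ℕ, ∃ l : ℕ, k < l ∧ ∃ M : ℝ, ∀ n : ℕ,
        Real.log ((n : ℝ) + 1) - (1 / ((k : ℝ) + 1) - 1 / ((l : ℝ) + 1)) * a n ≤ M,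
      Tendsto (fun n : ℕ => Real.log ((n : ℝ) + 1) / a n) atTop (𝓝 0) ].TFAE := by
  tfae_have 2 → 1 := by
    intro hb
    refine ⟨Stmt6Aux.Tinv, ?_, ?_, ?_, ?_, ?_, ?_⟩
    · intro x hx k
      obtain ⟨l, hkl, M, hM⟩ := hb k
      have key : ∀ n : ℕ, ((n:ℝ)+1) * wt a k n ≤ Real.exp M * wt a l n :=
        fun n => Stmt6Aux.exp_bound hM n
      apply squeeze_zero (fun n => mul_nonneg (Stmt6Aux.wt_pos a k n).le (norm_nonneg _))
        (fun n => Stmt6Aux.Tinv_term_bound hmono key x n)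
      have hA : Tendsto (fun n : ℕ => wt a l (n-1) * ‖x (n-1)‖) atTop (𝓝 0) :=
        (hx l).comp (tendsto_sub_atTop_nat 1)
      have hB := (hA.const_mul (Real.exp M)).add ((hx l).const_mul (Real.exp M))
      simpa using hB
    · intro x y _ _
      funext n
      simp only [Stmt6Aux.Tinv, Pi.add_apply]
      ring
    · intro c x _
      funext n
      simp only [Stmt6Aux.Tinv, Pi.smul_apply, smul_eq_mul]
      ring
    · intro k
      obtain ⟨l, hkl, M, hM⟩ := hb k
      refine ⟨l, 2 * Real.exp M, by positivity, ?_⟩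
      intro x hx
      have key : ∀ n : ℕ, ((n:ℝ)+1) * wt a k n ≤ Real.exp M * wt a l n :=
        fun n => Stmt6Aux.exp_bound hM n
      have hbdd : BddAbove (Set.range fun n => wt a l n * ‖x n‖) :=
        (hx l).bddAbove_range
      apply ciSup_le
      intro n
      have hA : wt a l (n-1) * ‖x (n-1)‖ ≤ pk a l x := le_ciSup hbdd (n-1)
      have hB : wt a l n * ‖x n‖ ≤ pk a l x := le_ciSup hbdd n
      have he : (0:ℝ) ≤ Real.exp M := (Real.exp_pos M).le
      calc wt a k n * ‖Stmt6Aux.Tinv x n‖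
          ≤ Real.exp M * (wt a l (n-1) * ‖x (n-1)‖)
            + Real.exp M * (wt a l n * ‖x n‖) :=
            Stmt6Aux.Tinv_term_bound hmono key x n
        _ ≤ Real.exp M * pk a l x + Real.exp M * pk a l x :=
            add_le_add (mul_le_mul_of_nonneg_left hA he) (mul_le_mul_of_nonneg_left hB he)
        _ = 2 * Real.exp M * pk a l x := by ring
    · intro x _
      funext n
      simp only [Stmt6Aux.Tinv, Pi.sub_apply, Pi.smul_apply, zero_smul, Pi.zero_apply, zero_sub]
      linear_combination Stmt6Aux.key_id x n
    · intro x _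
      funext n
      simp [Pi.sub_apply, Pi.smul_apply, zero_smul, zero_sub, Stmt6Aux.cesaro_Tinv]
  tfae_have 1 → 2 := by
    intro hT k
    obtain ⟨T, hTmem, -, -, hTcont, -, hTright⟩ := hT
    obtain ⟨l, M, hM, hbound⟩ := hTcont k
    refine ⟨max l (k+1), lt_max_of_lt_right (Nat.lt_succ_self k), Real.log M, ?_⟩
    intro N
    have hmem := Stmt6Aux.memLambda_delta a N
    have hTe := hTmem _ hmem
    have hright := hTright _ hmem
    have hc : ∀ n, cesaro (T (Stmt6Aux.delta N)) n = - Stmt6Aux.delta N n := by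
      intro n
      have h := congrFun hright n
      simp only [Pi.sub_apply, Pi.smul_apply, zero_smul, Pi.zero_apply, zero_sub] at h
      linear_combination -h
    have hval : T (Stmt6Aux.delta N) N = -(((N:ℂ))+1) := by
      have h := Stmt6Aux.key_id (T (Stmt6Aux.delta N)) N
      rw [hc N, hc (N-1)] at h
      rw [← h]
      cases N with
      | zero => simp [Stmt6Aux.delta]
      | succ m =>
        have hne : m ≠ m + 1 := by omega
        simp [Stmt6Aux.delta, Nat.add_sub_cancel, hne]
    have habs : ‖T (Stmt6Aux.delta N) N‖ = (N:ℝ)+1 := by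
      rw [hval, norm_neg, Stmt6Aux.abs_natCast_add_one]
    have hBdd : BddAbove (Set.range fun n => wt a k n * ‖T (Stmt6Aux.delta N) n‖) :=
      (hTe k).bddAbove_range
    have hstep1 : wt a k N * ((N:ℝ)+1) ≤ pk a k (T (Stmt6Aux.delta N)) := by
      have h := le_ciSup hBdd N
      rwa [habs] at h
    have hstep2 := hbound _ hmem
    have hstep3 : pk a l (Stmt6Aux.delta N) ≤ wt a l N := by
      apply ciSup_le
      intro m
      by_cases hm : m = N
      · subst hm; simp [Stmt6Aux.delta]
      · simp [Stmt6Aux.delta, hm, (Stmt6Aux.wt_pos a l N).le]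
    have hstep4 : wt a l N ≤ wt a (max l (k+1)) N :=
      Stmt6Aux.wt_mono h1 (le_max_left _ _) N
    have hineq : ((N:ℝ)+1) * wt a k N ≤ M * wt a (max l (k+1)) N := by
      calc ((N:ℝ)+1) * wt a k N = wt a k N * ((N:ℝ)+1) := by ring
        _ ≤ pk a k (T (Stmt6Aux.delta N)) := hstep1
        _ ≤ M * pk a l (Stmt6Aux.delta N) := hstep2
        _ ≤ M * wt a (max l (k+1)) N :=
            mul_le_mul_of_nonneg_left (hstep3.trans hstep4) hM.le
    have hpos1 : (0:ℝ) < ((N:ℝ)+1) * wt a k N :=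
      mul_pos (by positivity) (Stmt6Aux.wt_pos a k N)
    have hlog := Real.log_le_log hpos1 hineq
    rw [Real.log_mul (by positivity) (ne_of_gt (Stmt6Aux.wt_pos a k N)),
        Real.log_mul (ne_of_gt hM) (ne_of_gt (Stmt6Aux.wt_pos a (max l (k+1)) N))] at hlog
    have e1 : Real.log (wt a k N) = -(a N)/((k:ℝ)+1) := Real.log_exp _
    have e2 : Real.log (wt a (max l (k+1)) N)
        = -(a N)/(((max l (k+1) : ℕ):ℝ)+1) := Real.log_exp _
    have hr : (1/((k:ℝ)+1) - 1/(((max l (k+1) : ℕ):ℝ)+1)) * a N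
        = (-(a N)/(((max l (k+1) : ℕ):ℝ)+1)) - (-(a N)/((k:ℝ)+1)) := by ring
    rw [e1, e2] at hlog
    linarith [hlog, hr]
  tfae_have 2 → 3 := by
    intro hb
    rw [Metric.tendsto_atTop]
    intro δ hδ
    obtain ⟨k, hk⟩ := exists_nat_one_div_lt (half_pos hδ)
    obtain ⟨l, hkl, M, hM⟩ := hb k
    have hev : ∀ᶠ n in atTop, 2 * (|M| + 1) / δ ≤ a n := htop.eventually (eventually_ge_atTop _)
    rw [eventually_atTop] at hev
    obtain ⟨N, hN⟩ := hev
    refine ⟨N, fun n hn => ?_⟩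
    have han : (0:ℝ) < a n := lt_trans one_pos (h1 n)
    have hlogpos : (0:ℝ) ≤ Real.log ((n:ℝ)+1) :=
      Real.log_nonneg (by linarith [Nat.cast_nonneg (α := ℝ) n])
    have h2 : Real.log ((n:ℝ)+1) ≤ M + (1/((k:ℝ)+1)) * a n := by
      have hM' := hM n
      have hl : (0:ℝ) ≤ (1/((l:ℝ)+1)) * a n := by positivity
      have hr : (1/((k:ℝ)+1) - 1/((l:ℝ)+1)) * a n
          = (1/((k:ℝ)+1)) * a n - (1/((l:ℝ)+1)) * a n := by ring
      linarith [hM', hr, hl]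
    have h3 : Real.log ((n:ℝ)+1) / a n ≤ M / a n + 1/((k:ℝ)+1) := by
      have heq : (M + (1/((k:ℝ)+1)) * a n) / a n = M / a n + 1/((k:ℝ)+1) := by
        field_simp
      rw [← heq]
      exact (div_le_div_iff_of_pos_right han).2 h2
    have h4 : M / a n ≤ δ / 2 := by
      rw [div_le_iff₀ han]
      have hNa := hN n hn
      have key2 : δ/2 * (2*(|M|+1)/δ) = |M|+1 := by
        field_simp
      have hmul := mul_le_mul_of_nonneg_left hNa (le_of_lt (half_pos hδ))
      linarith [le_abs_self M, key2, hmul]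
    rw [Real.dist_eq, sub_zero, abs_of_nonneg (div_nonneg hlogpos han.le)]
    calc Real.log ((n:ℝ)+1)/a n ≤ M/a n + 1/((k:ℝ)+1) := h3
      _ < δ/2 + δ/2 := add_lt_add_of_le_of_lt h4 hk
      _ = δ := by ring
  tfae_have 3 → 2 := by
    intro hc k
    refine ⟨k+1, Nat.lt_succ_self k, ?_⟩
    have hε : (0:ℝ) < 1/((k:ℝ)+1) - 1/((k:ℝ)+1+1) := by
      have h0 : (0:ℝ) < (k:ℝ)+1 := by positivity
      rw [sub_pos]
      exact one_div_lt_one_div_of_lt h0 (by linarith)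
    have hev := hc.eventually (eventually_le_nhds hε)
    rw [eventually_atTop] at hev
    obtain ⟨N, hN⟩ := hev
    refine ⟨max 0 (Real.log ((N:ℝ)+1)), ?_⟩
    intro n
    have han : (0:ℝ) < a n := lt_trans one_pos (h1 n)
    have hcast : ((k+1:ℕ):ℝ) = (k:ℝ)+1 := by push_cast; ring
    rw [hcast]
    rcases le_or_gt N n with h | h
    · have hNn := hN n h
      have hlog : Real.log ((n:ℝ)+1) ≤ (1/((k:ℝ)+1) - 1/((k:ℝ)+1+1)) * a n := by
        rw [div_le_iff₀ han] at hNn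
        linarith [hNn]
      have := le_max_left (0:ℝ) (Real.log ((N:ℝ)+1))
      linarith
    · have hlog : Real.log ((n:ℝ)+1) ≤ Real.log ((N:ℝ)+1) := by
        apply Real.log_le_log (by positivity)
        have : (n:ℝ) ≤ (N:ℝ) := by exact_mod_cast h.le
        linarith
      have hpos : 0 < (1/((k:ℝ)+1) - 1/((k:ℝ)+1+1)) * a n := mul_pos hε han
      have := le_max_right (0:ℝ) (Real.log ((N:ℝ)+1))
      linarith
  tfae_finish
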